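/- Let N₁, N₂ ≥ 1 be integers, set δ = π/(2N₁ + 2N₂ − 1) and q = cos((4N₂−1)π/(4N₁+4N₂−2))/cos(π/(4N₁+4N₂−2)). Then −1 < q < 1 and (1 + q)·cos(δN₁)·sin(δN₂) = (1 − q)·sin(δN₁)·cos(δN₂); equivalently, (1+q)/(1−q) = tan(δN₁)/tan(δN₂). (With (a−2b+c)/(a−c) = q this is the identity (a−b)/(b−c) = tan(δN₁)/tan(δN₂), which shows that the polar planes of the discrete umbilic vertices belong to the families of planes of the circular cross sections, i.e. the apices of the discrete touching cones along the discrete circular cross sections lie on the lines through opposite discrete umbilic vertices.) -/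

import Mathlib

open Real

theorem discrete_umbilic_tangent_identity
    (N₁ N₂ : ℕ) (hN₁ : 1 ≤ N₁) (hN₂ : 1 ≤ N₂)
    (δ q : ℝ)
    (hδ : δ = Real.pi / (2 * (N₁ : ℝ) + 2 * (N₂ : ℝ) - 1))
    (hq : q = Real.cos ((4 * (N₂ : ℝ) - 1) * Real.pi / (4 * (N₁ : ℝ) + 4 * (N₂ : ℝ) - 2))
        / Real.cos (Real.pi / (4 * (N₁ : ℝ) + 4 * (N₂ : ℝ) - 2))) :
    (-1 < q ∧ q < 1) ∧
    (1 + q) * Real.cos (δ * N₁) * Real.sin (δ * N₂)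
      = (1 - q) * Real.sin (δ * N₁) * Real.cos (δ * N₂) := by
  have hn₁ : (1:ℝ) ≤ (N₁:ℝ) := by exact_mod_cast hN₁
  have hn₂ : (1:ℝ) ≤ (N₂:ℝ) := by exact_mod_cast hN₂
  set n₁ := (N₁:ℝ) with hn1def
  set n₂ := (N₂:ℝ) with hn2def
  have hDpos : (0:ℝ) < 4*n₁ + 4*n₂ - 2 := by linarith
  set ε := Real.pi / (4 * n₁ + 4 * n₂ - 2) with hε
  have hπpos := Real.pi_pos
  have hεpos : 0 < ε := div_pos hπpos hDpos
  have hπ : Real.pi = (4*n₁ + 4*n₂ - 2) * ε := by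
    rw [hε]; field_simp
    exact (div_self (by intro h; linarith)).symm
  have hεlt : ε < Real.pi/2 := by
    rw [hε, div_lt_div_iff₀ hDpos two_pos]
    nlinarith
  have hcos : 0 < Real.cos ε := Real.cos_pos_of_mem_Ioo ⟨by linarith, hεlt⟩
  have hmid : (4 * n₂ - 1) * Real.pi / (4 * n₁ + 4 * n₂ - 2) = (4*n₂-1) * ε := by
    rw [hε]; ring
  have hlow : ε < (4*n₂-1)*ε := by nlinarith
  have hhigh : (4*n₂-1)*ε < Real.pi - ε := by
    rw [hπ]; nlinarith
  have hub : Real.cos ((4*n₂-1)*ε) < Real.cos ε :=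
    Real.cos_lt_cos_of_nonneg_of_le_pi (le_of_lt hεpos) (by rw [hπ]; nlinarith) hlow
  have hlb : -Real.cos ε < Real.cos ((4*n₂-1)*ε) := by
    have h := Real.cos_lt_cos_of_nonneg_of_le_pi
      (by nlinarith : (0:ℝ) ≤ (4*n₂-1)*ε) (by linarith) hhigh
    rwa [Real.cos_pi_sub] at h
  have hq1 : q < 1 := by
    rw [hq, hmid]
    exact (div_lt_one hcos).mpr hub
  have hq2 : -1 < q := by
    rw [hq, hmid]
    rw [lt_div_iff₀ hcos]
    linarith
  have hδε : δ = 2 * ε := by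
    have hd1 : (0:ℝ) < 2*n₁+2*n₂-1 := by linarith
    rw [hδ, hε, show (4*n₁+4*n₂-2) = 2*(2*n₁+2*n₂-1) by ring]
    rw [← mul_div_assoc, mul_div_mul_left _ _ (two_ne_zero)]
  have hAB : Real.sin (δ * n₁ + δ * n₂) = Real.cos ε := by
    have h : δ * n₁ + δ * n₂ = Real.pi/2 + ε := by
      rw [hδε]; linear_combination (-1/2) * hπ
    rw [h, Real.sin_add, Real.sin_pi_div_two, Real.cos_pi_div_two]; ring
  have hnum : Real.cos ((4*n₂-1)*ε) = Real.sin (δ * n₁ - δ * n₂) := by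
    have h : (4*n₂-1)*ε = Real.pi/2 - (δ * n₁ - δ * n₂) := by
      rw [hδε]; linear_combination (-1/2) * hπ
    rw [h, Real.cos_pi_div_two_sub]
  refine ⟨⟨hq2, hq1⟩, ?_⟩
  have hSpos : 0 < Real.sin (δ * n₁) * Real.cos (δ * n₂)
      + Real.cos (δ * n₁) * Real.sin (δ * n₂) := by
    rw [← Real.sin_add, hAB]; exact hcos
  rw [hq, hmid, hnum, ← hAB, Real.sin_add, Real.sin_sub]
  field_simp
  ring
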